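/- If coefficients c : {0,1}ⁿ → ℂ (n ≥ 3) are all nonzero and satisfy c_I c_{I'} = c_{I'_j} c_{I_j} for every pair of multi-indices I, I' that differ in some slot j and agree in some other slot, then the corresponding n-qubit state Σ_I c_I |I⟩ is a tensor product of a single-qubit state and an (n−1)-qubit state. -/
import Mathlib

open scoped BigOperators

/-- Complement the bit in slot `j` of the multi-index `I`. -/
def bflip {n : ℕ} (I : Fin n → Fin 2) (j : Fin n) : Fin n → Fin 2 :=
  Function.update I j (1 - I j)

theorem stmt14 {n : ℕ} (hn : 3 ≤ n) (c : (Fin n → Fin 2) → ℂ)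
    (hnz : ∀ I, c I ≠ 0)
    (hyp : ∀ (I I' : Fin n → Fin 2) (j : Fin n), I j ≠ I' j →
      (∃ k, k ≠ j ∧ I k = I' k) →
      c I * c I' = c (bflip I' j) * c (bflip I j)) :
    ∃ (j : Fin n) (a : Fin 2 → ℂ) (b : ({k : Fin n // k ≠ j} → Fin 2) → ℂ),
      ∀ I : Fin n → Fin 2, c I = a (I j) * b (fun k => I k.1) := by
  have hn0 : 0 < n := by omega
  set j : Fin n := ⟨0, hn0⟩ with hj
  set R : (Fin n → Fin 2) → ℂ :=
    fun I => c (Function.update I j 1) / c (Function.update I j 0) with hR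
  have two : ∀ x : Fin 2, x = 0 ∨ x = 1 := by decide
  -- step: flipping a coordinate k ≠ j doesn't change R
  have step : ∀ (I : Fin n → Fin 2) (k : Fin n) (v : Fin 2), k ≠ j →
      R (Function.update I k v) = R I := by
    intro I k v hk
    rcases eq_or_ne v (I k) with rfl | hv
    · rw [Function.update_eq_self]
    obtain ⟨l, hlj, hlk⟩ : ∃ l : Fin n, l ≠ j ∧ l ≠ k := by
      by_contra h
      push_neg at h
      have hsub : (Finset.univ : Finset (Fin n)) ⊆ {j, k} := by
        intro l _
        rcases eq_or_ne l j with rfl | hlj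
        · simp
        · simp [h l hlj]
      have h1 := Finset.card_le_card hsub
      have h2 : ({j, k} : Finset (Fin n)).card ≤ 2 :=
        (Finset.card_insert_le _ _).trans (by simp)
      simp [Finset.card_univ] at h1
      omega
    set A := Function.update I j 1 with hA
    set B := Function.update (Function.update I k v) j 0 with hB
    have hdiff : A j ≠ B j := by simp [hA, hB]
    have hagree : ∃ l', l' ≠ j ∧ A l' = B l' := by
      refine ⟨l, hlj, ?_⟩
      simp [hA, hB, Function.update_of_ne hlj, Function.update_of_ne hlk]
    have key := hyp A B j hdiff hagree
    have hBj : bflip B j = Function.update (Function.update I k v) j 1 := by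
      simp [bflip, hB, Function.update_idem]
    have hAj : bflip A j = Function.update I j 0 := by
      simp [bflip, hA, Function.update_idem]
    rw [hBj, hAj] at key
    have h1 := hnz (Function.update I j 0)
    have h2 := hnz (Function.update (Function.update I k v) j 0)
    rw [hR]
    have hcomm : Function.update (Function.update I k v) j 1
        = Function.update (Function.update I j 1) k v := Function.update_comm hk.symm _ _ _ |>.symm ▸ rfl
    field_simp
    -- goal: c (update (update I k v) j 1) * c (update I j 0) = c (update I j 1) * c (update (update I k v) j 0)
    rw [hA] at key
    rw [hB] at key
    linear_combination -key
  -- R is invariant under update at j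
  have stepj : ∀ (I : Fin n → Fin 2) (v : Fin 2), R (Function.update I j v) = R I := by
    intro I v
    simp [hR, Function.update_idem]
  -- R is globally constant
  have const : ∀ I : Fin n → Fin 2, R I = R (fun _ => 0) := by
    have main : ∀ (m : ℕ) (I : Fin n → Fin 2),
        (Finset.univ.filter fun k => I k ≠ 0).card ≤ m → R I = R (fun _ => 0) := by
      intro m
      induction m with
      | zero =>
        intro I hI
        have : I = fun _ => 0 := by
          funext k
          by_contra hk
          have : k ∈ Finset.univ.filter fun k => I k ≠ 0 := by simp [hk]
          have := Finset.card_pos.mpr ⟨k, this⟩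
          omega
        rw [this]
      | succ m ih =>
        intro I hI
        rcases Finset.eq_empty_or_nonempty (Finset.univ.filter fun k => I k ≠ 0) with he | ⟨k, hk⟩
        · have : I = fun _ => 0 := by
            funext k
            by_contra hkk
            have : k ∈ Finset.univ.filter fun k => I k ≠ 0 := by simp [hkk]
            simp [he] at this
          rw [this]
        · simp only [Finset.mem_filter] at hk
          set I' := Function.update I k 0 with hI'
          have hcard : (Finset.univ.filter fun l => I' l ≠ 0).card ≤ m := by
            have hsub : (Finset.univ.filter fun l => I' l ≠ 0)
                ⊆ (Finset.univ.filter fun l => I l ≠ 0).erase k := by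
              intro l hl
              simp only [Finset.mem_filter, Finset.mem_erase, Finset.mem_univ, true_and] at hl ⊢
              rcases eq_or_ne l k with rfl | hlk
              · simp [hI'] at hl
              · exact ⟨hlk, by simpa [hI', Function.update_of_ne hlk] using hl⟩
            have := Finset.card_le_card hsub
            have hek := Finset.card_erase_of_mem (by simp [hk.2])
              (s := Finset.univ.filter fun l => I l ≠ 0) (a := k)
            omega
          have hrec := ih I' hcard
          rcases eq_or_ne k j with rfl | hkj
          · rw [← hrec, hI', stepj]
          · rw [← hrec, hI', step _ _ _ hkj]
    intro I
    exact main n I (le_trans (Finset.card_le_card (Finset.filter_subset _ _)) (by simp))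
  -- build a and b
  refine ⟨j, fun i => if i = 0 then 1 else R (fun _ => 0),
    fun g => c (fun k => if h : k = j then 0 else g ⟨k, h⟩), ?_⟩
  intro I
  have hext : (fun k : Fin n => if h : k = j then 0 else I k) = Function.update I j 0 := by
    funext k
    rcases eq_or_ne k j with rfl | hkj
    · simp
    · simp [hkj, Function.update_of_ne hkj]
  simp only [hext]
  rcases two (I j) with h0 | h1
  · have : Function.update I j 0 = I := by rw [← h0, Function.update_eq_self]
    simp [h0, this]
  · have hup : Function.update I j 1 = I := by rw [← h1, Function.update_eq_self]
    have := const I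
    rw [hR] at this
    simp only [hup] at this
    have hd := hnz (Function.update I j 0)
    rw [h1]
    simp only [show (1 : Fin 2) ≠ 0 by decide, if_false, hR]
    rw [← this]
    field_simp
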